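/- Let r be a rate function and φ = r⁻¹ its (convex, strictly increasing, continuous) inverse. Let a < b and let B₁, B₂ : [a,b] → ℝ be piecewise continuously differentiable, nondecreasing functions with B₂ convex, B₁(t) ≤ B₂(t) for all t ∈ [a,b], B₁(a) = B₂(a), and B₁(b) = B₂(b). Then ∫ₐᵇ φ(B₂'(t)) dt ≤ ∫ₐᵇ φ(B₁'(t)) dt; i.e., a convex transmitted data curve pointwise dominating another curve with the same endpoints uses no more energy. -/

import Mathlib

open MeasureTheory Set Filter intervalIntegral

noncomputable section

/-- `φ` is the inverse of the rate function `r` on `[0,∞)`. -/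
def IsInverseOn (φ r : ℝ → ℝ) : Prop :=
  (∀ p : ℝ, 0 ≤ p → φ (r p) = p) ∧ (∀ y : ℝ, 0 ≤ y → r (φ y) = y) ∧
    (∀ y : ℝ, 0 ≤ y → 0 ≤ φ y)

/-- `f` is piecewise continuously differentiable on `[a,b]` with derivative `f'`:
`f` is continuous, differentiable with derivative `f'` off a finite set, and `f'`
is piecewise continuous and bounded. -/
def PiecewiseC1On (a b : ℝ) (f f' : ℝ → ℝ) : Prop :=
  ContinuousOn f (Set.Icc a b) ∧
  (∃ s : Finset ℝ, (∀ t ∈ Set.Ioo a b, t ∉ s → HasDerivAt f (f' t) t) ∧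
    ContinuousOn f' (Set.Icc a b \ (s : Set ℝ))) ∧
  (∃ M : ℝ, ∀ t ∈ Set.Icc a b, |f' t| ≤ M)

/-- A rate function: continuous, strictly increasing, concave on `[0,∞)`,
vanishing at `0` and tending to `∞`. -/
def IsRateFunction (r : ℝ → ℝ) : Prop :=
  ContinuousOn r (Set.Ici 0) ∧ StrictMonoOn r (Set.Ici 0) ∧
    ConcaveOn ℝ (Set.Ici 0) r ∧ r 0 = 0 ∧
    Filter.Tendsto r Filter.atTop Filter.atTop

open Topology

section EnergyAux

def ratePsi (φ : ℝ → ℝ) (y : ℝ) : ℝ :=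
  sInf ((fun z => (φ z - φ y) / (z - y)) '' Set.Ioi y)

variable {φ : ℝ → ℝ}

lemma ratePsi_set_nonempty (φ : ℝ → ℝ) (y : ℝ) :
    ((fun z => (φ z - φ y) / (z - y)) '' Set.Ioi y).Nonempty :=
  ⟨_, ⟨y + 1, by simp, rfl⟩⟩

lemma ratePsi_slope_nonneg (hm : MonotoneOn φ (Set.Ici 0)) {y z : ℝ}
    (hy : 0 ≤ y) (hz : y < z) : 0 ≤ (φ z - φ y) / (z - y) :=
  div_nonneg (sub_nonneg.2 (hm hy (hy.trans hz.le) hz.le)) (by linarith)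

lemma ratePsi_bddBelow (hm : MonotoneOn φ (Set.Ici 0)) {y : ℝ} (hy : 0 ≤ y) :
    BddBelow ((fun z => (φ z - φ y) / (z - y)) '' Set.Ioi y) := by
  refine ⟨0, ?_⟩
  rintro w ⟨z, hz, rfl⟩
  exact ratePsi_slope_nonneg hm hy hz

lemma ratePsi_nonneg (hm : MonotoneOn φ (Set.Ici 0)) {y : ℝ} (hy : 0 ≤ y) :
    0 ≤ ratePsi φ y := by
  refine le_csInf (ratePsi_set_nonempty φ y) ?_
  rintro w ⟨z, hz, rfl⟩
  exact ratePsi_slope_nonneg hm hy hz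

lemma ratePsi_le_slope (hm : MonotoneOn φ (Set.Ici 0)) {y z : ℝ} (hy : 0 ≤ y) (hz : y < z) :
    ratePsi φ y ≤ (φ z - φ y) / (z - y) :=
  csInf_le (ratePsi_bddBelow hm hy) ⟨z, hz, rfl⟩

lemma slope_le_ratePsi (hc : ConvexOn ℝ (Set.Ici 0) φ) {x y : ℝ} (hx : 0 ≤ x) (hxy : x < y) :
    (φ y - φ x) / (y - x) ≤ ratePsi φ y := by
  refine le_csInf (ratePsi_set_nonempty φ y) ?_
  rintro w ⟨z, hz, rfl⟩
  exact hc.slope_mono_adjacent hx (by simp only [Set.mem_Ici]; linarith [hz.out]) hxy hz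

lemma ratePsi_mono (hm : MonotoneOn φ (Set.Ici 0)) (hc : ConvexOn ℝ (Set.Ici 0) φ)
    {y₁ y₂ : ℝ} (hy₁ : 0 ≤ y₁) (h : y₁ ≤ y₂) : ratePsi φ y₁ ≤ ratePsi φ y₂ := by
  rcases eq_or_lt_of_le h with rfl | hlt
  · exact le_rfl
  · exact (ratePsi_le_slope hm hy₁ hlt).trans (slope_le_ratePsi hc hy₁ hlt)

lemma ratePsi_subgrad (hm : MonotoneOn φ (Set.Ici 0)) (hc : ConvexOn ℝ (Set.Ici 0) φ)
    {x y : ℝ} (hx : 0 ≤ x) (hy : 0 ≤ y) :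
    φ y + ratePsi φ y * (x - y) ≤ φ x := by
  rcases lt_trichotomy x y with hlt | rfl | hgt
  · have h1 : (φ y - φ x) / (y - x) ≤ ratePsi φ y := slope_le_ratePsi hc hx hlt
    have h2 : ratePsi φ y * (x - y) ≤ (φ y - φ x) / (y - x) * (x - y) :=
      mul_le_mul_of_nonpos_right h1 (by linarith)
    have h3 : (φ y - φ x) / (y - x) * (x - y) = φ x - φ y := by
      have hne : y - x ≠ 0 := by linarith
      field_simp
      ring
    linarith
  · simp
  · have h1 : ratePsi φ y ≤ (φ x - φ y) / (x - y) := ratePsi_le_slope hm hy hgt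
    have h2 : ratePsi φ y * (x - y) ≤ (φ x - φ y) / (x - y) * (x - y) :=
      mul_le_mul_of_nonneg_right h1 (by linarith)
    have h3 : (φ x - φ y) / (x - y) * (x - y) = φ x - φ y :=
      div_mul_cancel₀ _ (by linarith)
    linarith

lemma ratePsi_le_succ (hm : MonotoneOn φ (Set.Ici 0)) {y : ℝ} (hy : 0 ≤ y) :
    ratePsi φ y ≤ φ (y + 1) - φ y := by
  have := ratePsi_le_slope hm hy (by linarith : y < y + 1)
  simpa using this

lemma hasDerivAt_nonneg_of_monotoneOn {f : ℝ → ℝ} {a b t d : ℝ}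
    (hf : MonotoneOn f (Set.Icc a b)) (ht : t ∈ Set.Ioo a b) (hd : HasDerivAt f d t) :
    0 ≤ d := by
  have h1 : Tendsto (slope f t) (𝓝[>] t) (𝓝 d) :=
    (hasDerivAt_iff_tendsto_slope.mp hd).mono_left
      (nhdsWithin_mono t fun u hu => Set.mem_compl_singleton_iff.mpr (ne_of_gt hu))
  refine ge_of_tendsto h1 ?_
  filter_upwards [Ioo_mem_nhdsGT_of_mem (⟨le_refl t, ht.2⟩ : t ∈ Set.Ico t b)] with u hu
  rw [slope_def_field]
  have htm : t ∈ Set.Icc a b := ⟨ht.1.le, ht.2.le⟩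
  have hum : u ∈ Set.Icc a b := ⟨ht.1.le.trans hu.1.le, hu.2.le⟩
  exact div_nonneg (sub_nonneg.2 (hf htm hum hu.1.le)) (sub_nonneg.2 hu.1.le)

end EnergyAux

/-- Non-strict energy-comparison inequality: a convex transmitted data curve
`B₂` pointwise dominating `B₁`, with the same endpoints, uses no more energy. -/
theorem convex_dominating_curve_less_energy
    (r φ : ℝ → ℝ) (hr : IsRateFunction r) (hφ : IsInverseOn φ r)
    (hφ_cont : ContinuousOn φ (Set.Ici 0))
    (hφ_mono : StrictMonoOn φ (Set.Ici 0))
    (hφ_convex : ConvexOn ℝ (Set.Ici 0) φ)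
    (a b : ℝ) (hab : a < b)
    (B₁ B₁' B₂ B₂' : ℝ → ℝ)
    (hB₁_pc1 : PiecewiseC1On a b B₁ B₁') (hB₂_pc1 : PiecewiseC1On a b B₂ B₂')
    (hB₁_mono : MonotoneOn B₁ (Set.Icc a b)) (hB₂_mono : MonotoneOn B₂ (Set.Icc a b))
    (hB₂_convex : ConvexOn ℝ (Set.Icc a b) B₂)
    (h_le : ∀ t ∈ Set.Icc a b, B₁ t ≤ B₂ t)
    (h_start : B₁ a = B₂ a) (h_end : B₁ b = B₂ b) :
    (∫ t in a..b, φ (B₂' t)) ≤ ∫ t in a..b, φ (B₁' t) := by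
  obtain ⟨hB₁c, ⟨s₁, hd₁, hc₁⟩, M₁, hM₁⟩ := hB₁_pc1
  obtain ⟨hB₂c, ⟨s₂, hd₂, hc₂⟩, M₂, hM₂⟩ := hB₂_pc1
  have hφm : MonotoneOn φ (Set.Ici 0) := hφ_mono.monotoneOn
  have hφ0 : ∀ y : ℝ, 0 ≤ y → 0 ≤ φ y := hφ.2.2
  set s : Finset ℝ := s₁ ∪ s₂ with hs_def
  have hs_count : (↑s : Set ℝ).Countable := (s.finite_toSet).countable
  have hs_null : volume (↑s : Set ℝ) = 0 := hs_count.measure_zero _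
  -- derivatives are nonnegative
  have h1nn : ∀ t ∈ Set.Ioo a b, t ∉ s₁ → 0 ≤ B₁' t := fun t ht hts =>
    hasDerivAt_nonneg_of_monotoneOn hB₁_mono ht (hd₁ t ht hts)
  have h2nn : ∀ t ∈ Set.Ioo a b, t ∉ s₂ → 0 ≤ B₂' t := fun t ht hts =>
    hasDerivAt_nonneg_of_monotoneOn hB₂_mono ht (hd₂ t ht hts)
  -- B₂' is monotone off s₂
  have h2mono : ∀ t₁ ∈ Set.Ioo a b, t₁ ∉ s₂ → ∀ t₂ ∈ Set.Ioo a b, t₂ ∉ s₂ → t₁ ≤ t₂ →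
      B₂' t₁ ≤ B₂' t₂ := by
    intro t₁ ht₁ ht₁s t₂ ht₂ ht₂s h12
    rcases eq_or_lt_of_le h12 with rfl | hlt
    · exact le_rfl
    have hm₁ : t₁ ∈ Set.Icc a b := ⟨ht₁.1.le, ht₁.2.le⟩
    have hm₂ : t₂ ∈ Set.Icc a b := ⟨ht₂.1.le, ht₂.2.le⟩
    have hle1 : B₂' t₁ ≤ slope B₂ t₁ t₂ :=
      hB₂_convex.le_slope_of_hasDerivAt hm₁ hm₂ hlt (hd₂ t₁ ht₁ ht₁s)
    have hle2 : slope B₂ t₁ t₂ ≤ B₂' t₂ :=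
      hB₂_convex.slope_le_of_hasDerivAt hm₁ hm₂ hlt (hd₂ t₂ ht₂ ht₂s)
    exact hle1.trans hle2
  -- the monotone envelope D of B₂'
  set M : ℝ := max M₂ 0 with hM_def
  set D : ℝ → ℝ := fun t => sSup (B₂' '' (Set.Ioo a (min t b) \ (↑s₂ : Set ℝ))) with hD_def
  have hsubIoo : ∀ t : ℝ, Set.Ioo a (min t b) \ (↑s₂ : Set ℝ) ⊆ Set.Ioo a b \ (↑s₂ : Set ℝ) :=
    fun t => Set.diff_subset_diff_left (Set.Ioo_subset_Ioo_right (min_le_right t b))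
  have helt : ∀ t : ℝ, ∀ x ∈ B₂' '' (Set.Ioo a (min t b) \ (↑s₂ : Set ℝ)), 0 ≤ x ∧ x ≤ M := by
    rintro t x ⟨u, hu, rfl⟩
    have hu' := hsubIoo t hu
    refine ⟨h2nn u hu'.1 hu'.2, ?_⟩
    calc B₂' u ≤ |B₂' u| := le_abs_self _
      _ ≤ M₂ := hM₂ u ⟨hu'.1.1.le, hu'.1.2.le⟩
      _ ≤ M := le_max_left _ _
  have hDbdd : ∀ t : ℝ, BddAbove (B₂' '' (Set.Ioo a (min t b) \ (↑s₂ : Set ℝ))) :=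
    fun t => ⟨M, fun x hx => (helt t x hx).2⟩
  have hD_nonneg : ∀ t : ℝ, 0 ≤ D t := fun t =>
    Real.sSup_nonneg (fun x hx => (helt t x hx).1)
  have hD_le : ∀ t : ℝ, D t ≤ M := fun t =>
    Real.sSup_le (fun x hx => (helt t x hx).2) (le_max_right _ _)
  have hD_mono : Monotone D := by
    intro t t' htt'
    refine Real.sSup_le (fun x hx => ?_) (hD_nonneg t')
    refine le_csSup (hDbdd t') ?_
    exact Set.image_mono (Set.diff_subset_diff_left
      (Set.Ioo_subset_Ioo_right (min_le_min htt' le_rfl))) hx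
  have hD_eq : ∀ t ∈ Set.Ioo a b, t ∉ s₂ → D t = B₂' t := by
    intro t ht hts
    have hmin : min t b = t := min_eq_left ht.2.le
    have himg : B₂' '' (Set.Ioo a (min t b) \ (↑s₂ : Set ℝ))
        = B₂' '' (Set.Ioo a t \ (↑s₂ : Set ℝ)) := by rw [hmin]
    refine le_antisymm ?_ ?_
    · refine Real.sSup_le ?_ (h2nn t ht hts)
      rintro x ⟨u, hu, rfl⟩
      rw [hmin] at hu
      exact h2mono u ⟨hu.1.1, hu.1.2.trans ht.2⟩ hu.2 t ht hts hu.1.2.le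
    · -- continuity from the left
      classical
      set T : Finset ℝ := insert a (s₂.filter (fun x => x < t)) with hT_def
      have hTne : T.Nonempty := ⟨a, Finset.mem_insert_self _ _⟩
      set c : ℝ := T.max' hTne with hc_def
      have hct : c < t := by
        rw [hc_def, Finset.max'_lt_iff]
        intro y hy
        rcases Finset.mem_insert.mp hy with rfl | hy'
        · exact ht.1
        · exact (Finset.mem_filter.mp hy').2
      have hac : a ≤ c := Finset.le_max' T a (Finset.mem_insert_self _ _)
      have hIoo_sub : Set.Ioo c t ⊆ Set.Ioo a (min t b) \ (↑s₂ : Set ℝ) := by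
        intro u hu
        refine ⟨⟨lt_of_le_of_lt hac hu.1, lt_min hu.2 (hu.2.trans ht.2)⟩, ?_⟩
        intro hus₂
        have huT : u ∈ T := Finset.mem_insert_of_mem
          (Finset.mem_filter.mpr ⟨hus₂, hu.2⟩)
        exact absurd (Finset.le_max' T u huT) (not_le.mpr hu.1)
      have htmem : t ∈ Set.Icc a b \ (↑s₂ : Set ℝ) := ⟨⟨ht.1.le, ht.2.le⟩, hts⟩
      have hc_cont : ContinuousWithinAt B₂' (Set.Ioo c t) t := by
        refine (hc₂ t htmem).mono ?_
        intro u hu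
        refine ⟨⟨hac.trans hu.1.le, hu.2.le.trans ht.2.le⟩, (hIoo_sub hu).2⟩
      have hNe : (𝓝[Set.Ioo c t] t).NeBot := by
        rw [← mem_closure_iff_nhdsWithin_neBot, closure_Ioo hct.ne]
        exact ⟨hct.le, le_rfl⟩
      refine le_of_tendsto hc_cont ?_
      filter_upwards [self_mem_nhdsWithin] with u hu
      exact le_csSup (hDbdd t) ⟨u, hIoo_sub hu, rfl⟩
  -- the monotone weight g and its bounds
  set g : ℝ → ℝ := fun t => ratePsi φ (D t) with hg_def
  have hg_mono : Monotone g := fun x y hxy =>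
    ratePsi_mono hφm hφ_convex (hD_nonneg x) (hD_mono hxy)
  have hg_meas : Measurable g := hg_mono.measurable
  set K : ℝ := φ (M + 1) - φ 0 with hK_def
  have hg_nonneg : ∀ t, 0 ≤ g t := fun t => ratePsi_nonneg hφm (hD_nonneg t)
  have hg_le : ∀ t, g t ≤ K := by
    intro t
    refine (ratePsi_le_succ hφm (hD_nonneg t)).trans ?_
    have h1 : φ (D t + 1) ≤ φ (M + 1) := by
      refine hφm ?_ ?_ (by linarith [hD_le t])
      · simp only [Set.mem_Ici]; linarith [hD_nonneg t]
      · simp only [Set.mem_Ici]; linarith [hD_nonneg t, hD_le t]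
    have h2 : φ 0 ≤ φ (D t) := hφm (le_refl (0:ℝ)) (hD_nonneg t) (hD_nonneg t)
    linarith
  have hK_nonneg : 0 ≤ K := by
    have h0 : (0:ℝ) ≤ M + 1 := by linarith [le_max_right M₂ (0:ℝ)]
    have := hφm Set.self_mem_Ici (Set.mem_Ici.mpr h0) h0
    linarith
  -- the good full-measure set E
  set E : Set ℝ := Set.Ioo a b \ (↑s : Set ℝ) with hE_def
  have hE_meas : MeasurableSet E := measurableSet_Ioo.diff (s.finite_toSet.measurableSet)
  have hE_spec : ∀ t ∈ E, t ∈ Set.Ioo a b ∧ t ∉ s₁ ∧ t ∉ s₂ := by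
    intro t ht
    refine ⟨ht.1, ?_, ?_⟩
    · intro h; exact ht.2 (by simp [hs_def, h])
    · intro h; exact ht.2 (by simp [hs_def, h])
  have hE_ae : E =ᵐ[volume] Set.Ioc a b := by
    rw [MeasureTheory.ae_eq_set]
    constructor
    · refine measure_mono_null (fun x hx => ?_) (measure_empty (μ := volume))
      exact absurd ⟨hx.1.1.1, hx.1.1.2.le⟩ hx.2
    · refine measure_mono_null (fun x hx => ?_)
        (measure_union_null hs_null (measure_singleton b))
      rcases hx with ⟨hx1, hx2⟩
      by_cases hxs : x ∈ (↑s : Set ℝ)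
      · exact Or.inl hxs
      · refine Or.inr ?_
        have : ¬ (x ∈ Set.Ioo a b) := fun h => hx2 ⟨h, hxs⟩
        have : ¬ (x < b) := fun h => this ⟨hx1.1, h⟩
        simp only [Set.mem_singleton_iff]
        linarith [hx1.2]
  have hrestr : volume.restrict E = volume.restrict (Set.Ioc a b) :=
    Measure.restrict_congr_set hE_ae
  have hae_of_E : ∀ {p : ℝ → Prop}, (∀ t ∈ E, p t) →
      (∀ᵐ t ∂volume.restrict (Set.Ioc a b), p t) := by
    intro p hp
    rw [← hrestr]
    exact (ae_restrict_iff' hE_meas).mpr (ae_of_all _ hp)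
  -- measurability
  have hcont₁E : ContinuousOn B₁' E :=
    hc₁.mono (fun t ht => ⟨⟨ht.1.1.le, ht.1.2.le⟩, (hE_spec t ht).2.1⟩)
  have hcont₂E : ContinuousOn B₂' E :=
    hc₂.mono (fun t ht => ⟨⟨ht.1.1.le, ht.1.2.le⟩, (hE_spec t ht).2.2⟩)
  have hmeas₁ : AEMeasurable B₁' (volume.restrict (Set.Ioc a b)) := by
    rw [← hrestr]; exact hcont₁E.aemeasurable hE_meas
  have hmeas₂ : AEMeasurable B₂' (volume.restrict (Set.Ioc a b)) := by
    rw [← hrestr]; exact hcont₂E.aemeasurable hE_meas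
  have hmapsto₁ : Set.MapsTo B₁' E (Set.Ici 0) := fun t ht =>
    Set.mem_Ici.mpr (h1nn t (hE_spec t ht).1 (hE_spec t ht).2.1)
  have hmapsto₂ : Set.MapsTo B₂' E (Set.Ici 0) := fun t ht =>
    Set.mem_Ici.mpr (h2nn t (hE_spec t ht).1 (hE_spec t ht).2.2)
  have hmeasφ₁ : AEMeasurable (fun t => φ (B₁' t)) (volume.restrict (Set.Ioc a b)) := by
    rw [← hrestr]
    exact (hφ_cont.comp hcont₁E hmapsto₁).aemeasurable hE_meas
  have hmeasφ₂ : AEMeasurable (fun t => φ (B₂' t)) (volume.restrict (Set.Ioc a b)) := by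
    rw [← hrestr]
    exact (hφ_cont.comp hcont₂E hmapsto₂).aemeasurable hE_meas
  -- integrability
  have hIntφ : ∀ (B' : ℝ → ℝ) (MM : ℝ), (∀ t ∈ Set.Icc a b, |B' t| ≤ MM) →
      (∀ t ∈ E, 0 ≤ B' t) →
      AEMeasurable (fun t => φ (B' t)) (volume.restrict (Set.Ioc a b)) →
      IntegrableOn (fun t => φ (B' t)) (Set.Ioc a b) volume := by
    intro B' MM hMM hnn hmeas
    refine Integrable.mono' (integrable_const (φ (max MM 0))) hmeas.aestronglyMeasurable ?_
    refine hae_of_E ?_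
    intro t ht
    have hto := (hE_spec t ht).1
    have h0 : 0 ≤ B' t := hnn t ht
    have hub : B' t ≤ max MM 0 :=
      le_trans (le_abs_self _) (le_trans (hMM t ⟨hto.1.le, hto.2.le⟩) (le_max_left _ _))
    rw [Real.norm_eq_abs, abs_of_nonneg (hφ0 _ h0)]
    exact hφm (Set.mem_Ici.mpr h0) (Set.mem_Ici.mpr (le_trans h0 hub)) hub
  have hIntφ₁ : IntegrableOn (fun t => φ (B₁' t)) (Set.Ioc a b) volume :=
    hIntφ B₁' M₁ hM₁ (fun t ht => h1nn t (hE_spec t ht).1 (hE_spec t ht).2.1) hmeasφ₁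
  have hIntφ₂ : IntegrableOn (fun t => φ (B₂' t)) (Set.Ioc a b) volume :=
    hIntφ B₂' M₂ hM₂ (fun t ht => h2nn t (hE_spec t ht).1 (hE_spec t ht).2.2) hmeasφ₂
  have hmeas_h : AEStronglyMeasurable (fun t => B₁' t - B₂' t)
      (volume.restrict (Set.Ioc a b)) := (hmeas₁.sub hmeas₂).aestronglyMeasurable
  have hCbound : ∀ t ∈ Set.Icc a b, |B₁' t - B₂' t| ≤ M₁ + M₂ := by
    intro t ht
    have h1 := hM₁ t ht; have h2 := hM₂ t ht
    rw [abs_le] at h1 h2 ⊢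
    constructor <;> [linarith [h1.1, h2.2]; linarith [h1.2, h2.1]]
  have hInt_h : IntegrableOn (fun t => B₁' t - B₂' t) (Set.Ioc a b) volume := by
    refine Integrable.mono' (integrable_const (M₁ + M₂)) hmeas_h ?_
    filter_upwards [ae_restrict_mem measurableSet_Ioc] with t ht
    rw [Real.norm_eq_abs]
    exact hCbound t ⟨ht.1.le, ht.2⟩
  have hMM_nonneg : 0 ≤ M₁ + M₂ := by
    have h1 := hM₁ a ⟨le_rfl, hab.le⟩; have h2 := hM₂ a ⟨le_rfl, hab.le⟩
    have := abs_nonneg (B₁' a); have := abs_nonneg (B₂' a)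
    linarith
  have hInt_gh : IntegrableOn (fun t => g t * (B₁' t - B₂' t)) (Set.Ioc a b) volume := by
    refine Integrable.mono' (integrable_const (K * (M₁ + M₂)))
      ((hg_meas.aemeasurable.aestronglyMeasurable).mul hmeas_h) ?_
    filter_upwards [ae_restrict_mem measurableSet_Ioc] with t ht
    rw [Real.norm_eq_abs, abs_mul, abs_of_nonneg (hg_nonneg t)]
    exact mul_le_mul (hg_le t) (hCbound t ⟨ht.1.le, ht.2⟩) (abs_nonneg _) hK_nonneg
  -- FTC
  have hFTC : ∀ u ∈ Set.Icc a b, (∫ t in u..b, (B₁' t - B₂' t)) = B₂ u - B₁ u := by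
    intro u hu
    have hcont : ContinuousOn (fun t => B₁ t - B₂ t) (Set.Icc u b) :=
      (hB₁c.sub hB₂c).mono (Set.Icc_subset_Icc hu.1 le_rfl)
    have hderiv : ∀ x ∈ Set.Ioo u b \ (↑s : Set ℝ),
        HasDerivAt (fun t => B₁ t - B₂ t) (B₁' x - B₂' x) x := by
      intro x hx
      have hxo : x ∈ Set.Ioo a b := ⟨lt_of_le_of_lt hu.1 hx.1.1, hx.1.2⟩
      have hx₁ : x ∉ s₁ := fun h => hx.2 (by simp [hs_def, h])
      have hx₂ : x ∉ s₂ := fun h => hx.2 (by simp [hs_def, h])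
      exact (hd₁ x hxo hx₁).sub (hd₂ x hxo hx₂)
    have hint : IntervalIntegrable (fun t => B₁' t - B₂' t) volume u b :=
      (intervalIntegrable_iff_integrableOn_Ioc_of_le hu.2).mpr
        (hInt_h.mono_set (Set.Ioc_subset_Ioc_left hu.1))
    rw [MeasureTheory.integral_eq_of_hasDerivAt_off_countable_of_le _ _ hu.2
      hs_count hcont hderiv hint, h_end]
    ring
  -- Step A: subgradient inequality
  have hsubgrad : ∀ t ∈ E, φ (B₂' t) + g t * (B₁' t - B₂' t) ≤ φ (B₁' t) := by
    intro t ht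
    obtain ⟨hto, hts₁, hts₂⟩ := hE_spec t ht
    have hgt : g t = ratePsi φ (B₂' t) := by
      simp only [hg_def]; rw [hD_eq t hto hts₂]
    rw [hgt]
    exact ratePsi_subgrad hφm hφ_convex (h1nn t hto hts₁) (h2nn t hto hts₂)
  have hA : (∫ t in Set.Ioc a b, φ (B₂' t)) + (∫ t in Set.Ioc a b, g t * (B₁' t - B₂' t))
      ≤ ∫ t in Set.Ioc a b, φ (B₁' t) := by
    rw [← integral_add hIntφ₂ hInt_gh]
    exact integral_mono_ae (hIntφ₂.add hInt_gh) hIntφ₁ (hae_of_E hsubgrad)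
  -- Step B
  have hB : 0 ≤ ∫ t in Set.Ioc a b, g t * (B₁' t - B₂' t) := by
    set ν : Measure ℝ := volume.restrict (Set.Ioc a b) with hν_def
    set ρ : Measure ℝ := volume.restrict (Set.Ioc 0 K) with hρ_def
    haveI hνfin : IsFiniteMeasure ν := ⟨by
      rw [hν_def, Measure.restrict_apply_univ]; exact measure_Ioc_lt_top⟩
    haveI hρfin : IsFiniteMeasure ρ := ⟨by
      rw [hρ_def, Measure.restrict_apply_univ]; exact measure_Ioc_lt_top⟩
    obtain ⟨h', h'_sm, h'_ae⟩ := hmeas_h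
    have e1 : (∫ t, g t * (B₁' t - B₂' t) ∂ν) = ∫ t, g t * h' t ∂ν := by
      refine integral_congr_ae ?_
      filter_upwards [h'_ae] with t ht
      rw [ht]
    set A2 : Set (ℝ × ℝ) := {q : ℝ × ℝ | q.2 < g q.1} with hA2_def
    have hA2_meas : MeasurableSet A2 :=
      measurableSet_lt measurable_snd (hg_meas.comp measurable_fst)
    set F : ℝ × ℝ → ℝ := A2.indicator (fun q => h' q.1) with hF_def
    have hF_sm : StronglyMeasurable F :=
      (h'_sm.comp_measurable measurable_fst).indicator hA2_meas
    have hIio : ∀ t : ℝ, (ρ (Set.Iio (g t))).toReal = g t := by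
      intro t
      rw [hρ_def, Measure.restrict_apply measurableSet_Iio]
      have heq : Set.Iio (g t) ∩ Set.Ioc 0 K = Set.Ioo 0 (g t) := by
        ext x
        simp only [Set.mem_inter_iff, Set.mem_Iio, Set.mem_Ioc, Set.mem_Ioo]
        constructor
        · rintro ⟨h1, h2, h3⟩; exact ⟨h2, h1⟩
        · rintro ⟨h1, h2⟩; exact ⟨h2, h1, le_trans h2.le (hg_le t)⟩
      rw [heq, Real.volume_Ioo, sub_zero, ENNReal.toReal_ofReal (hg_nonneg t)]
    have hinner : ∀ t : ℝ, (∫ lam, F (t, lam) ∂ρ) = g t * h' t := by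
      intro t
      have heq : (fun lam => F (t, lam)) = (Set.Iio (g t)).indicator (fun _ => h' t) := by
        ext lam
        simp only [hF_def, hA2_def, Set.indicator_apply, Set.mem_setOf_eq, Set.mem_Iio]
      rw [heq, integral_indicator_const _ measurableSet_Iio, measureReal_def, hIio t, smul_eq_mul, mul_comm]
    have hbound_ae : ∀ᵐ t ∂ν, |h' t| ≤ M₁ + M₂ := by
      filter_upwards [h'_ae, ae_restrict_mem measurableSet_Ioc] with t h1 h2
      rw [← h1]
      exact hCbound t ⟨h2.1.le, h2.2⟩
    have hbound_prod : ∀ᵐ p ∂(ν.prod ρ), |h' p.1| ≤ M₁ + M₂ := by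
      rw [ae_iff]
      have hsub : {p : ℝ × ℝ | ¬ |h' p.1| ≤ M₁ + M₂} ⊆
          {t : ℝ | ¬ |h' t| ≤ M₁ + M₂} ×ˢ (Set.univ : Set ℝ) := fun p hp => ⟨hp, Set.mem_univ _⟩
      refine measure_mono_null hsub ?_
      rw [Measure.prod_prod]
      have hzero : ν {t : ℝ | ¬ |h' t| ≤ M₁ + M₂} = 0 := by
        have := hbound_ae; rwa [ae_iff] at this
      rw [hzero, zero_mul]
    have hF_int : Integrable F (ν.prod ρ) := by
      refine Integrable.mono' (integrable_const (M₁ + M₂)) hF_sm.aestronglyMeasurable ?_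
      filter_upwards [hbound_prod] with p hp
      rw [Real.norm_eq_abs]
      refine le_trans ?_ hp
      have := norm_indicator_le_norm_self (s := A2) (fun q : ℝ × ℝ => h' q.1) p
      simpa [Real.norm_eq_abs, hF_def] using this
    have hswap : (∫ t, ∫ lam, F (t, lam) ∂ρ ∂ν) = ∫ lam, ∫ t, F (t, lam) ∂ν ∂ρ := by
      apply integral_integral_swap
      exact hF_int
    have e2 : (∫ t, g t * h' t ∂ν) = ∫ t, ∫ lam, F (t, lam) ∂ρ ∂ν :=
      integral_congr_ae (ae_of_all _ fun t => (hinner t).symm)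
    have hpos : ∀ lam : ℝ, 0 ≤ ∫ t, F (t, lam) ∂ν := by
      intro lam
      set A : Set ℝ := {t : ℝ | lam < g t} with hA_def
      have hA_meas : MeasurableSet A := measurableSet_lt measurable_const hg_meas
      have hup : ∀ x ∈ A, ∀ y : ℝ, x ≤ y → y ∈ A := fun x hx y hxy =>
        lt_of_lt_of_le hx (hg_mono hxy)
      have hFA : (fun t => F (t, lam)) = A.indicator h' := by
        ext t
        simp only [hF_def, hA2_def, hA_def, Set.indicator_apply, Set.mem_setOf_eq]
      rw [hFA, hν_def, setIntegral_indicator hA_meas]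
      by_cases hne : (Set.Ioc a b ∩ A).Nonempty
      · have hbdd : BddBelow (Set.Ioc a b ∩ A) := ⟨a, fun x hx => hx.1.1.le⟩
        set u : ℝ := sInf (Set.Ioc a b ∩ A) with hu_def
        have hua : a ≤ u := le_csInf hne (fun x hx => hx.1.1.le)
        have hub : u ≤ b := by
          obtain ⟨x, hx⟩ := hne
          exact (csInf_le hbdd hx).trans hx.1.2
        have hsub1 : Set.Ioo u b ⊆ Set.Ioc a b ∩ A := by
          intro x hx
          obtain ⟨x₀, hx₀, hx₀x⟩ := exists_lt_of_csInf_lt hne hx.1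
          exact ⟨⟨lt_of_le_of_lt hua hx.1, hx.2.le⟩, hup x₀ hx₀.2 x hx₀x.le⟩
        have hsub2 : Set.Ioc a b ∩ A ⊆ Set.Icc u b := fun x hx =>
          ⟨csInf_le hbdd hx, hx.1.2⟩
        have hae2 : ((Set.Ioc a b ∩ A : Set ℝ) : Set ℝ) =ᵐ[volume] (Set.Ioc u b : Set ℝ) := by
          rw [MeasureTheory.ae_eq_set]
          constructor
          · refine measure_mono_null (fun x hx => ?_) (measure_singleton u)
            have h1 := hsub2 hx.1
            have h2 : ¬ (u < x ∧ x ≤ b) := hx.2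
            simp only [Set.mem_singleton_iff]
            rcases lt_or_eq_of_le h1.1 with h | h
            · exact absurd ⟨h, h1.2⟩ h2
            · exact h.symm
          · refine measure_mono_null (fun x hx => ?_) (measure_singleton b)
            have h2 : ¬ (u < x ∧ x < b) := fun hcon => hx.2 (hsub1 hcon)
            simp only [Set.mem_singleton_iff]
            rcases lt_or_eq_of_le hx.1.2 with h | h
            · exact absurd ⟨hx.1.1, h⟩ h2
            · exact h
        rw [setIntegral_congr_set hae2]
        have hh'h : (∫ x in Set.Ioc u b, h' x) = ∫ x in Set.Ioc u b, (B₁' x - B₂' x) := by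
          refine integral_congr_ae ?_
          have hres := ae_restrict_of_ae_restrict_of_subset
            (Set.Ioc_subset_Ioc_left hua) h'_ae
          filter_upwards [hres] with x hx
          exact hx.symm
        rw [hh'h, ← intervalIntegral.integral_of_le hub, hFTC u ⟨hua, hub⟩]
        have := h_le u ⟨hua, hub⟩
        linarith
      · rw [Set.not_nonempty_iff_eq_empty.mp hne]
        simp
    rw [hν_def] at e1 e2 hswap ⊢
    rw [e1, e2, hswap]
    exact integral_nonneg hpos
  rw [intervalIntegral.integral_of_le hab.le, intervalIntegral.integral_of_le hab.le]
  linarith
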